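/- Let 0 < q < 1, λ > 0, and let G : [-λ/2, λ/2] → [0,1] be continuously differentiable. Define V(G)(z) := exp(-∫_{-λ/2}^{λ/2} q·((z+t)_+)^{q-1}·G(t) dt) for z ∈ [-λ/2, λ/2], where x_+ = max(x,0). Then V(G) is differentiable on (-λ/2, λ/2) with derivative (V(G))'(z) = -V(G)(z)·( G(λ/2)·q·(z+λ/2)^{q-1} - ∫_{-z}^{λ/2} q·(z+t)^{q-1}·G'(t) dt ). -/

import Mathlib

open Set MeasureTheory intervalIntegral

lemma phi_cont (q : ℝ) (hq : 0 < q) : Continuous (fun x : ℝ => max x 0 ^ q) := by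
  have h : ∀ x : ℝ, ContinuousAt (fun x : ℝ => max x 0 ^ q) x := by
    intro x
    exact (Real.continuousAt_rpow_const _ q (Or.inr hq.le)).comp
      ((continuous_id.max continuous_const).continuousAt)
  exact continuous_iff_continuousAt.mpr h

lemma hasDerivAt_phi (q : ℝ) (hq0 : 0 < q) (hq1 : q ≠ 1) {x : ℝ} (hx : x ≠ 0) :
    HasDerivAt (fun x : ℝ => max x 0 ^ q) (q * max x 0 ^ (q - 1)) x := by
  rcases lt_or_gt_of_ne hx with h | h
  · have hev : (fun x : ℝ => max x 0 ^ q) =ᶠ[nhds x] fun _ => (0:ℝ) ^ q := by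
      filter_upwards [eventually_lt_nhds h] with y hy
      rw [max_eq_right hy.le]
    have : max x 0 ^ (q-1) = 0 := by
      rw [max_eq_right h.le, Real.zero_rpow (sub_ne_zero.mpr hq1)]
    rw [this, mul_zero]
    have h0 : HasDerivAt (fun _ : ℝ => (0:ℝ) ^ q) 0 x := hasDerivAt_const x _
    exact h0.congr_of_eventuallyEq hev
  · have hev : (fun x : ℝ => max x 0 ^ q) =ᶠ[nhds x] fun y => y ^ q := by
      filter_upwards [eventually_gt_nhds h] with y hy
      rw [max_eq_left hy.le]
    have h1 := Real.hasDerivAt_rpow_const (x := x) (p := q) (Or.inl (ne_of_gt h))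
    rw [max_eq_left h.le]
    exact h1.congr_of_eventuallyEq hev

lemma psi_intble (r : ℝ) (hr0 : -1 < r) (hr1 : r ≠ 0) (a b : ℝ) :
    IntervalIntegrable (fun x : ℝ => max x 0 ^ r) volume a b := by
  have heq : (fun x : ℝ => max x 0 ^ r) = Set.indicator (Ioi 0) (fun x : ℝ => x ^ r) := by
    funext x
    rcases le_or_gt x 0 with h | h
    · rw [Set.indicator_of_notMem (by simpa using h), max_eq_right h, Real.zero_rpow hr1]
    · rw [Set.indicator_of_mem (by simpa using h), max_eq_left h.le]
  rw [heq, intervalIntegrable_iff, IntegrableOn, integrable_indicator_iff measurableSet_Ioi]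
  have h2 : IntegrableOn (fun x : ℝ => x ^ r) (Set.uIoc a b) volume :=
    (intervalIntegrable_rpow' (a := a) (b := b) hr0).def'
  rw [IntegrableOn, Measure.restrict_restrict measurableSet_Ioi]
  exact h2.mono_set inter_subset_right

lemma psi_comp_intble (r : ℝ) (hr0 : -1 < r) (hr1 : r ≠ 0) (z a b : ℝ) :
    IntervalIntegrable (fun t : ℝ => max (z + t) 0 ^ r) volume a b := by
  have := (psi_intble r hr0 hr1 (z + a) (z + b)).comp_add_left z
  simpa using this

lemma hasDerivAt_phi_shift (q : ℝ) (hq0 : 0 < q) (hq1 : q ≠ 1) {z t : ℝ} (ht : z + t ≠ 0) :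
    HasDerivAt (fun t : ℝ => max (z + t) 0 ^ q) (q * max (z + t) 0 ^ (q - 1)) t := by
  have h1 := (hasDerivAt_phi q hq0 hq1 ht).comp t ((hasDerivAt_id t).const_add z)
  simpa [Function.comp_def] using h1

lemma eval_int (q : ℝ) (hq0 : 0 < q) (hq1 : q ≠ 1) (z u v : ℝ) :
    ∫ t in u..v, q * max (z + t) 0 ^ (q - 1)
      = max (z + v) 0 ^ q - max (z + u) 0 ^ q := by
  have := MeasureTheory.integral_eq_of_hasDerivAt_off_countable
    (fun t : ℝ => max (z + t) 0 ^ q) (fun t => q * max (z + t) 0 ^ (q - 1))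
    (a := u) (b := v) (s := {-z}) (Set.countable_singleton _)
    (((phi_cont q hq0).comp (by continuity)).continuousOn)
    (fun x hx => hasDerivAt_phi_shift q hq0 hq1 (by
      intro h
      exact hx.2 (by simp only [Set.mem_singleton_iff]; linarith)))
    (((psi_comp_intble (q-1) (by linarith) (sub_ne_zero.mpr hq1) z u v)).const_mul q)
  exact this

lemma parts (q : ℝ) (hq0 : 0 < q) (hq1 : q < 1) (b : ℝ) (hb : 0 < b)
    (G D : ℝ → ℝ) (hGc : ContinuousOn G (Icc (-b) b))
    (hGd : ∀ t ∈ Ioo (-b) b, HasDerivAt G (D t) t)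
    (hDi : IntervalIntegrable D volume (-b) b)
    (y : ℝ) (hy : y ∈ Ioc (-b) b) :
    ∫ t in (-b)..b, q * max (y + t) 0 ^ (q - 1) * G t
      = G b * (y + b) ^ q - ∫ t in (-b)..b, max (y + t) 0 ^ q * D t := by
  have hbb : -b ≤ b := by linarith
  have huIcc : uIcc (-b) b = Icc (-b) b := uIcc_of_le hbb
  have hA : IntervalIntegrable (fun t => q * max (y + t) 0 ^ (q - 1) * G t) volume (-b) b := by
    have := ((psi_comp_intble (q-1) (by linarith) (by intro h; exact absurd (by linarith : q = 1) (ne_of_lt hq1)) y (-b) b).const_mul q).mul_continuousOn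
      (by rw [huIcc]; exact hGc)
    exact this
  have hphiC : Continuous (fun t : ℝ => max (y + t) 0 ^ q) :=
    (phi_cont q hq0).comp (by continuity)
  have hB : IntervalIntegrable (fun t => max (y + t) 0 ^ q * D t) volume (-b) b :=
    hDi.continuousOn_mul (by rw [huIcc]; exact hphiC.continuousOn)
  have key := MeasureTheory.integral_eq_of_hasDerivAt_off_countable
    (fun t : ℝ => max (y + t) 0 ^ q * G t)
    (fun t => q * max (y + t) 0 ^ (q - 1) * G t + max (y + t) 0 ^ q * D t)
    (a := -b) (b := b) (s := {-y}) (Set.countable_singleton _)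
    (by rw [huIcc]; exact hphiC.continuousOn.mul hGc)
    (fun x hx => by
      have hx1 : x ∈ Ioo (-b) b := by
        rcases hx with ⟨h1, _⟩
        rwa [min_eq_left hbb, max_eq_right hbb] at h1
      have hne : y + x ≠ 0 := fun h => hx.2 (by simp only [Set.mem_singleton_iff]; linarith)
      exact (hasDerivAt_phi_shift q hq0 (ne_of_lt hq1) hne).mul (hGd x hx1))
    (hA.add hB)
  rw [intervalIntegral.integral_add hA hB] at key
  have e1 : max (y + b) 0 = y + b := max_eq_left (by linarith [hy.1])
  have e2 : max (y + -b) 0 = 0 := max_eq_right (by linarith [hy.2])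
  simp only [e1, e2, Real.zero_rpow (show q ≠ 0 by linarith), zero_mul, sub_zero] at key
  linarith [key]

lemma psiD_intble (q : ℝ) (hq0 : 0 < q) (hq1 : q < 1) (z b M : ℝ) (hb : 0 < b)
    (D : ℝ → ℝ) (hDi : IntervalIntegrable D volume (-b) b)
    (hDb : ∀ t ∈ Ioo (-b) b, |D t| ≤ M) :
    IntervalIntegrable (fun t => q * max (z + t) 0 ^ (q - 1) * D t) volume (-b) b := by
  have hpsi := psi_comp_intble (q-1) (by linarith) (by intro h; nlinarith) z (-b) b
  rw [intervalIntegrable_iff] at hpsi hDi ⊢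
  have hae : ∀ᵐ t ∂(volume.restrict (Set.uIoc (-b) b)), t ∈ Ioo (-b) b := by
    rw [uIoc_of_le (by linarith : -b ≤ b), ← Measure.restrict_congr_set Ioo_ae_eq_Ioc]
    exact ae_restrict_mem measurableSet_Ioo
  refine Integrable.mono' ((hpsi.const_mul q).const_mul M) ?_ ?_
  · exact ((hpsi.const_mul q).aestronglyMeasurable).mul hDi.aestronglyMeasurable
  · filter_upwards [hae] with t ht
    have h1 : (0:ℝ) ≤ q * max (z + t) 0 ^ (q-1) := by positivity
    rw [norm_mul, Real.norm_eq_abs, Real.norm_eq_abs, abs_of_nonneg h1]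
    calc q * max (z + t) 0 ^ (q-1) * |D t| ≤ q * max (z + t) 0 ^ (q-1) * M :=
          mul_le_mul_of_nonneg_left (hDb t ht) h1
      _ = M * (q * max (z + t) 0 ^ (q-1)) := by ring

lemma abs_sub_le_of_mem_uIcc {s z y : ℝ} (hs : s ∈ uIcc z y) : |s - z| ≤ |y - z| := by
  rcases le_total z y with h | h
  · rw [uIcc_of_le h] at hs
    rw [abs_of_nonneg (by linarith [hs.1]), abs_of_nonneg (by linarith)]
    linarith [hs.2]
  · rw [uIcc_of_ge h] at hs
    rw [abs_of_nonpos (by linarith [hs.2]), abs_of_nonpos (by linarith)]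
    linarith [hs.1]

lemma eval_int_phi (q : ℝ) (hq0 : 0 < q) (u a b : ℝ) :
    ∫ t in a..b, max (u + t) 0 ^ q
      = (max (u + b) 0 ^ (q+1) - max (u + a) 0 ^ (q+1)) / (q+1) := by
  have h := eval_int (q+1) (by linarith) (by linarith) u a b
  rw [add_sub_cancel_right, intervalIntegral.integral_const_mul] at h
  have hq1 : q + 1 ≠ 0 := by linarith
  field_simp
  linarith [h]

set_option maxHeartbeats 2000000 in
lemma key_deriv (q : ℝ) (hq0 : 0 < q) (hq1 : q < 1) (b : ℝ) (hb : 0 < b)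
    (D : ℝ → ℝ) (M : ℝ) (hM : 0 ≤ M)
    (hDi : IntervalIntegrable D volume (-b) b)
    (hDb : ∀ t ∈ Ioo (-b) b, |D t| ≤ M)
    (z : ℝ) (hz : z ∈ Ioo (-b) b) :
    HasDerivAt (fun y => ∫ t in (-b)..b, max (y + t) 0 ^ q * D t)
      (∫ t in (-b)..b, q * max (z + t) 0 ^ (q - 1) * D t) z := by
  obtain ⟨hz1, hz2⟩ := hz
  rw [hasDerivAt_iff_isLittleO, Asymptotics.isLittleO_iff]
  intro ε hε
  set δ₁ : ℝ := min (min (z + b) (b - z)) ((ε / (6 * (M + 1))) ^ (q⁻¹ : ℝ)) with hδ₁def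
  have hδ₁pos : 0 < δ₁ := by
    refine lt_min (lt_min (by linarith) (by linarith)) ?_
    exact Real.rpow_pos_of_pos (by positivity) _
  have hδ₁zb : δ₁ ≤ z + b := le_trans (min_le_left _ _) (min_le_left _ _)
  have hδ₁bz : δ₁ ≤ b - z := le_trans (min_le_left _ _) (min_le_right _ _)
  have hδ₁q : δ₁ ^ q ≤ ε / (6 * (M + 1)) := by
    have h1 : δ₁ ^ q ≤ ((ε / (6 * (M + 1))) ^ (q⁻¹ : ℝ)) ^ q :=
      Real.rpow_le_rpow hδ₁pos.le (min_le_right _ _) hq0.le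
    rwa [Real.rpow_inv_rpow (by positivity) (ne_of_gt hq0)] at h1
  set c : ℝ := -z + δ₁ with hcdef
  have hcb : c ≤ b := by simp only [hcdef]; linarith
  have hac : -b < c := by simp only [hcdef]; linarith
  set K₀ : ℝ := q * (1 - q) * (δ₁ / 2) ^ (q - 2) with hK₀def
  have hK₀pos : 0 < K₀ := by
    apply mul_pos (mul_pos hq0 (by linarith))
    exact Real.rpow_pos_of_pos (by linarith) _
  set δ : ℝ := min (δ₁ / 2) (ε / (2 * (2 * b * K₀ * M + 1))) with hδdef
  have hδpos : 0 < δ := lt_min (by linarith) (by positivity)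
  rw [Metric.eventually_nhds_iff]
  refine ⟨δ, hδpos, ?_⟩
  intro y hy
  rw [Real.dist_eq] at hy
  have hyz1 : |y - z| ≤ δ₁ / 2 := le_trans hy.le (min_le_left _ _)
  have hyz2 : |y - z| ≤ ε / (2 * (2 * b * K₀ * M + 1)) := le_trans hy.le (min_le_right _ _)
  have habs := abs_le.mp hyz1
  have hyb : y < b := by cases' habs with h1 h2; linarith
  have hya : -b < y := by cases' habs with h1 h2; linarith
  have hcont : ∀ u : ℝ, ContinuousOn (fun t : ℝ => max (u + t) 0 ^ q) (uIcc (-b) b) :=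
    fun u => ((phi_cont q hq0).comp (by continuity)).continuousOn
  have hIy : IntervalIntegrable (fun t => max (y + t) 0 ^ q * D t) volume (-b) b :=
    hDi.continuousOn_mul (hcont y)
  have hIz : IntervalIntegrable (fun t => max (z + t) 0 ^ q * D t) volume (-b) b :=
    hDi.continuousOn_mul (hcont z)
  have hIψ : IntervalIntegrable (fun t => q * max (z + t) 0 ^ (q - 1) * D t) volume (-b) b :=
    psiD_intble q hq0 hq1 z b M hb D hDi hDb
  set Efun : ℝ → ℝ := fun t => max (y + t) 0 ^ q * D t - max (z + t) 0 ^ q * D t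
      - (y - z) * (q * max (z + t) 0 ^ (q - 1) * D t) with hEdef
  have hIE : IntervalIntegrable Efun volume (-b) b := (hIy.sub hIz).sub (hIψ.const_mul _)
  have hrepr : (∫ t in (-b)..b, max (y + t) 0 ^ q * D t)
      - (∫ t in (-b)..b, max (z + t) 0 ^ q * D t)
      - (y - z) • (∫ t in (-b)..b, q * max (z + t) 0 ^ (q - 1) * D t)
      = ∫ t in (-b)..b, Efun t := by
    rw [smul_eq_mul, ← intervalIntegral.integral_const_mul,
      ← intervalIntegral.integral_sub hIy hIz,
      ← intervalIntegral.integral_sub (hIy.sub hIz) (hIψ.const_mul _)]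
  have hcmem : c ∈ uIcc (-b) b := by
    rw [uIcc_of_le (by linarith : -b ≤ b)]
    exact ⟨hac.le, hcb⟩
  have hsub1 : uIcc (-b) c ⊆ uIcc (-b) b := uIcc_subset_uIcc left_mem_uIcc hcmem
  have hsub2 : uIcc c b ⊆ uIcc (-b) b := uIcc_subset_uIcc hcmem right_mem_uIcc
  have hsplit : (∫ t in (-b)..b, Efun t) = (∫ t in (-b)..c, Efun t) + ∫ t in c..b, Efun t :=
    (intervalIntegral.integral_add_adjacent_intervals (hIE.mono_set hsub1)
      (hIE.mono_set hsub2)).symm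
  have hnear : ‖∫ t in (-b)..c, Efun t‖ ≤ ε / 2 * |y - z| := by
    set w := max y z with hwdef
    set v := min y z with hvdef
    have hvw : v ≤ w := min_le_max
    have hwv : w - v = |y - z| := by rw [hwdef, hvdef, max_sub_min_eq_abs, abs_sub_comm]
    have hwle : w ≤ z + δ₁ / 2 := max_le (by linarith [habs.2]) (by linarith)
    have hvge : z - δ₁ / 2 ≤ v := le_min (by linarith [habs.1]) (by linarith)
    have hwb' : w + -b ≤ 0 := by
      have h := max_lt hyb hz2
      simp only [hwdef]
      linarith [h]
    have hvb' : v + -b ≤ 0 := by linarith [hvw]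
    have hvc : δ₁ / 2 ≤ v + c := by simp only [hcdef]; linarith
    have hwc : w + c ≤ 2 * δ₁ := by simp only [hcdef]; linarith
    have hmono : ∀ x x' : ℝ, x ≤ x' → max x 0 ^ q ≤ max x' 0 ^ q := fun x x' h =>
      Real.rpow_le_rpow (le_max_right _ _) (max_le_max h le_rfl) hq0.le
    have hq1ne : q - 1 ≠ 0 := by intro h; nlinarith
    set g : ℝ → ℝ := fun t => M * (max (w + t) 0 ^ q - max (v + t) 0 ^ q)
        + |y - z| * (M * (q * max (z + t) 0 ^ (q - 1))) with hgdef
    have hphiInt : ∀ u : ℝ, IntervalIntegrable (fun t : ℝ => max (u + t) 0 ^ q) volume (-b) c :=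
      fun u => ((phi_cont q hq0).comp (by continuity)).intervalIntegrable _ _
    have hg1 : IntervalIntegrable (fun t : ℝ => M * (max (w + t) 0 ^ q - max (v + t) 0 ^ q))
        volume (-b) c := (((hphiInt w).sub (hphiInt v)).const_mul M)
    have hg2 : IntervalIntegrable (fun t : ℝ => |y - z| * (M * (q * max (z + t) 0 ^ (q - 1))))
        volume (-b) c :=
      ((((psi_comp_intble (q-1) (by linarith) hq1ne z (-b) c).const_mul q).const_mul M).const_mul _)
    have hgint : IntervalIntegrable g volume (-b) c := hg1.add hg2
    have haeE : ∀ᵐ t ∂(volume.restrict (Set.uIoc (-b) c)), ‖Efun t‖ ≤ g t := by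
      have hae : ∀ᵐ t ∂(volume.restrict (Set.uIoc (-b) c)), t ∈ Ioo (-b) c := by
        rw [uIoc_of_le hac.le, ← Measure.restrict_congr_set Ioo_ae_eq_Ioc]
        exact ae_restrict_mem measurableSet_Ioo
      filter_upwards [hae] with t ht
      have hD : |D t| ≤ M := hDb t ⟨ht.1, lt_of_lt_of_le ht.2 hcb⟩
      have hfac : Efun t = (max (y + t) 0 ^ q - max (z + t) 0 ^ q
          - (y - z) * (q * max (z + t) 0 ^ (q - 1))) * D t := by simp only [hEdef]; ring
      rw [hfac, Real.norm_eq_abs, abs_mul]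
      have hm1 : max (v + t) 0 ^ q ≤ max (y + t) 0 ^ q := hmono _ _ (by simp only [hvdef]; linarith [min_le_left y z])
      have hm2 : max (y + t) 0 ^ q ≤ max (w + t) 0 ^ q := hmono _ _ (by simp only [hwdef]; linarith [le_max_left y z])
      have hm3 : max (v + t) 0 ^ q ≤ max (z + t) 0 ^ q := hmono _ _ (by simp only [hvdef]; linarith [min_le_right y z])
      have hm4 : max (z + t) 0 ^ q ≤ max (w + t) 0 ^ q := hmono _ _ (by simp only [hwdef]; linarith [le_max_right y z])
      have h1 : |max (y + t) 0 ^ q - max (z + t) 0 ^ q|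
          ≤ max (w + t) 0 ^ q - max (v + t) 0 ^ q :=
        abs_le.mpr ⟨by linarith, by linarith⟩
      have hψnn : (0:ℝ) ≤ q * max (z + t) 0 ^ (q - 1) := by positivity
      have htri : |max (y + t) 0 ^ q - max (z + t) 0 ^ q - (y - z) * (q * max (z + t) 0 ^ (q - 1))|
          ≤ (max (w + t) 0 ^ q - max (v + t) 0 ^ q) + |y - z| * (q * max (z + t) 0 ^ (q - 1)) := by
        have := abs_sub (max (y + t) 0 ^ q - max (z + t) 0 ^ q) ((y - z) * (q * max (z + t) 0 ^ (q - 1)))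
        rw [abs_mul, abs_of_nonneg hψnn] at this
        linarith [this, h1]
      calc |max (y + t) 0 ^ q - max (z + t) 0 ^ q - (y - z) * (q * max (z + t) 0 ^ (q - 1))| * |D t|
          ≤ ((max (w + t) 0 ^ q - max (v + t) 0 ^ q) + |y - z| * (q * max (z + t) 0 ^ (q - 1))) * M := by
            apply mul_le_mul htri hD (abs_nonneg _)
            have := abs_nonneg (max (y + t) 0 ^ q - max (z + t) 0 ^ q - (y - z) * (q * max (z + t) 0 ^ (q - 1)))
            linarith [htri, this]
        _ = g t := by simp only [hgdef]; ring
    have hnorm := intervalIntegral.norm_integral_le_abs_of_norm_le haeE hgint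
    have hzc : z + c = δ₁ := by simp only [hcdef]; ring
    have hgval : (∫ t in (-b)..c, g t)
        = M * (((w + c) ^ (q+1) - 0) / (q+1) - ((v + c) ^ (q+1) - 0) / (q+1))
          + |y - z| * (M * (δ₁ ^ q - 0)) := by
      rw [hgdef]
      rw [intervalIntegral.integral_add hg1 hg2, intervalIntegral.integral_const_mul,
        intervalIntegral.integral_const_mul, intervalIntegral.integral_const_mul,
        intervalIntegral.integral_sub (hphiInt w) (hphiInt v),
        eval_int_phi q hq0, eval_int_phi q hq0, eval_int q hq0 (ne_of_lt hq1)]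
      rw [max_eq_left (by linarith : (0:ℝ) ≤ w + c), max_eq_left (by linarith : (0:ℝ) ≤ v + c),
        max_eq_right hwb', max_eq_right hvb', hzc,
        max_eq_left hδ₁pos.le, max_eq_right (by linarith : z + -b ≤ 0),
        Real.zero_rpow (by linarith : q + 1 ≠ 0), Real.zero_rpow (by linarith : q ≠ 0)]
    have hΦmvt : (w + c) ^ (q+1) - (v + c) ^ (q+1) ≤ (q+1) * ((2*δ₁) ^ q) * (w - v) := by
      have hmvt := Convex.norm_image_sub_le_of_norm_hasDerivWithin_le
        (f := fun x : ℝ => x ^ (q+1)) (f' := fun x : ℝ => (q+1) * x ^ (q+1-1))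
        (s := Icc (v+c) (w+c)) (C := (q+1) * (2*δ₁) ^ q)
        (fun x _ => (Real.hasDerivAt_rpow_const (Or.inr (by linarith))).hasDerivWithinAt)
        (fun x hx => by
          rw [Real.norm_eq_abs, abs_mul, abs_of_nonneg (by linarith : (0:ℝ) ≤ q + 1),
            abs_of_nonneg (Real.rpow_nonneg (by linarith [hx.1] : (0:ℝ) ≤ x) _)]
          have hxle : x ^ (q+1-1) ≤ (2*δ₁) ^ q := by
            rw [show q+1-1 = q by ring]
            exact Real.rpow_le_rpow (by linarith [hx.1]) (by linarith [hx.2]) hq0.le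
          exact mul_le_mul_of_nonneg_left hxle (by linarith))
        (convex_Icc _ _) (mem_Icc.mpr ⟨le_rfl, by linarith⟩) (mem_Icc.mpr ⟨by linarith, le_rfl⟩)
      rw [Real.norm_eq_abs, Real.norm_eq_abs] at hmvt
      have h1 : w + c - (v + c) = w - v := by ring
      rw [h1, abs_of_nonneg (by linarith : (0:ℝ) ≤ w - v)] at hmvt
      calc (w + c) ^ (q+1) - (v + c) ^ (q+1) ≤ |(w + c) ^ (q+1) - (v + c) ^ (q+1)| := le_abs_self _
        _ ≤ (q+1) * (2*δ₁) ^ q * (w - v) := hmvt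
    have h2δ : (2*δ₁) ^ q ≤ 2 * δ₁ ^ q := by
      rw [Real.mul_rpow (by norm_num) hδ₁pos.le]
      have h2q : (2:ℝ) ^ q ≤ 2 := by
        have := Real.rpow_le_rpow_of_exponent_le (by norm_num : (1:ℝ) ≤ 2) hq1.le
        rwa [Real.rpow_one] at this
      have : (0:ℝ) ≤ δ₁ ^ q := Real.rpow_nonneg hδ₁pos.le _
      nlinarith
    have hvwpow : (v + c) ^ (q+1) ≤ (w + c) ^ (q+1) :=
      Real.rpow_le_rpow (by linarith) (by linarith) (by linarith)
    have hδq0 : (0:ℝ) ≤ δ₁ ^ q := Real.rpow_nonneg hδ₁pos.le _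
    have hgle : (∫ t in (-b)..c, g t) ≤ 3 * M * δ₁ ^ q * |y - z| := by
      rw [hgval]
      have e1 : M * (((w + c) ^ (q+1) - 0) / (q+1) - ((v + c) ^ (q+1) - 0) / (q+1))
          = M * (((w + c) ^ (q+1) - (v + c) ^ (q+1)) / (q+1)) := by ring
      rw [e1]
      have hstep : ((w + c) ^ (q+1) - (v + c) ^ (q+1)) / (q+1) ≤ (2*δ₁) ^ q * (w - v) := by
        rw [div_le_iff₀ (by linarith : (0:ℝ) < q + 1)]
        calc (w + c) ^ (q+1) - (v + c) ^ (q+1) ≤ (q+1) * ((2*δ₁) ^ q) * (w - v) := hΦmvt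
          _ = (2*δ₁) ^ q * (w - v) * (q+1) := by ring
      have habs0 : (0:ℝ) ≤ |y - z| := abs_nonneg _
      have hs2 : (2*δ₁) ^ q * (w - v) ≤ 2 * δ₁ ^ q * |y - z| := by
        rw [hwv]
        exact mul_le_mul_of_nonneg_right h2δ habs0
      have hM1 : M * (((w + c) ^ (q+1) - (v + c) ^ (q+1)) / (q+1)) ≤ M * (2 * δ₁ ^ q * |y - z|) :=
        mul_le_mul_of_nonneg_left (hstep.trans hs2) hM
      have hM2 : |y - z| * (M * (δ₁ ^ q - 0)) = M * δ₁ ^ q * |y - z| := by ring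
      rw [hM2]
      linarith [hM1]
    have hfinal : 3 * M * δ₁ ^ q * |y - z| ≤ ε / 2 * |y - z| := by
      have h1 : 3 * M * δ₁ ^ q ≤ 3 * M * (ε / (6 * (M + 1))) :=
        mul_le_mul_of_nonneg_left hδ₁q (by linarith)
      have h2 : 3 * M * (ε / (6 * (M + 1))) ≤ ε / 2 := by
        have hM1 : (0:ℝ) < M + 1 := by linarith
        have he : 3 * M * (ε / (6 * (M + 1))) = ε / 2 * (M / (M + 1)) := by
          field_simp
          ring
        rw [he]
        have hle : M / (M + 1) ≤ 1 := (div_le_one hM1).mpr (by linarith)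
        calc ε / 2 * (M / (M + 1)) ≤ ε / 2 * 1 := mul_le_mul_of_nonneg_left hle (by linarith)
          _ = ε / 2 := mul_one _
      exact mul_le_mul_of_nonneg_right (h1.trans h2) (abs_nonneg _)
    have hgabs : |∫ t in (-b)..c, g t| = ∫ t in (-b)..c, g t := by
      rw [abs_of_nonneg]
      rw [hgval]
      have hdiff0 : (0:ℝ) ≤ ((w + c) ^ (q+1) - 0) / (q+1) - ((v + c) ^ (q+1) - 0) / (q+1) := by
        rw [sub_zero, sub_zero, sub_nonneg]
        exact (div_le_div_iff_of_pos_right (by linarith : (0:ℝ) < q + 1)).mpr hvwpow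
      refine add_nonneg (mul_nonneg hM hdiff0) (mul_nonneg (abs_nonneg _) (mul_nonneg hM ?_))
      rw [sub_zero]
      exact hδq0
    calc ‖∫ t in (-b)..c, Efun t‖ ≤ |∫ t in (-b)..c, g t| := hnorm
      _ = ∫ t in (-b)..c, g t := hgabs
      _ ≤ 3 * M * δ₁ ^ q * |y - z| := hgle
      _ ≤ ε / 2 * |y - z| := hfinal
  have hfar : ‖∫ t in c..b, Efun t‖ ≤ 2 * b * K₀ * M * (|y - z| * |y - z|) := by
    have hb_ae : ∀ᵐ x : ℝ ∂volume, x ≠ b := by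
      rw [MeasureTheory.ae_iff]
      have hset : {x : ℝ | ¬ x ≠ b} = {b} := by
        ext x
        simp [not_not]
      rw [hset]
      exact measure_singleton b
    have hkey := intervalIntegral.norm_integral_le_of_norm_le_const_ae (a := c) (b := b)
      (C := K₀ * M * (|y - z| * |y - z|)) (f := Efun) ?_
    · have habc : |b - c| ≤ 2 * b := by
        rw [abs_of_nonneg (by linarith)]
        simp only [hcdef]
        linarith
      calc ‖∫ t in c..b, Efun t‖ ≤ K₀ * M * (|y - z| * |y - z|) * |b - c| := hkey
        _ ≤ K₀ * M * (|y - z| * |y - z|) * (2 * b) := by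
            apply mul_le_mul_of_nonneg_left habc
            positivity
        _ = 2 * b * K₀ * M * (|y - z| * |y - z|) := by ring
    · filter_upwards [hb_ae] with x hxb hx
      rw [uIoc_of_le hcb] at hx
      have hxIoo : x ∈ Ioo (-b) b := ⟨by linarith [hx.1, hac], lt_of_le_of_ne hx.2 hxb⟩
      have hDx := hDb x hxIoo
      have hzx : δ₁ < z + x := by
        have := hx.1
        simp only [hcdef] at this
        linarith
      have hsx : ∀ s, s ∈ uIcc z y → δ₁ / 2 < s + x := by
        intro s hs
        have h1 : min z y ≤ s := by
          rw [uIcc] at hs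
          exact hs.1
        have h2 : z - δ₁ / 2 ≤ min z y := le_min (by linarith) (by linarith [habs.1])
        linarith
      have hinner : ∀ s ∈ uIcc z y,
          ‖q * (s + x) ^ (q-1) - q * (z + x) ^ (q-1)‖ ≤ K₀ * |y - z| := by
        intro s hs
        have hsx' := hsx s hs
        have hzx' : δ₁ / 2 ≤ z + x := by linarith
        have hmvt2 := Convex.norm_image_sub_le_of_norm_hasDerivWithin_le
          (f := fun u : ℝ => u ^ (q-1)) (f' := fun u : ℝ => (q-1) * u ^ (q-1-1))
          (s := Ici (δ₁/2)) (C := (1-q) * (δ₁/2) ^ (q-2))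
          (fun u hu => (Real.hasDerivAt_rpow_const
            (Or.inl (by rw [mem_Ici] at hu; intro h0; rw [h0] at hu; linarith))).hasDerivWithinAt)
          (fun u hu => by
            rw [mem_Ici] at hu
            have hu0 : (0:ℝ) < u := by linarith
            rw [Real.norm_eq_abs, abs_mul, abs_of_nonpos (by linarith : q - 1 ≤ 0),
              abs_of_nonneg (Real.rpow_nonneg hu0.le _)]
            have hle2 : u ^ (q-1-1) ≤ (δ₁/2) ^ (q-2) := by
              rw [show q-1-1 = q-2 by ring]
              exact Real.rpow_le_rpow_of_nonpos (by linarith) hu (by linarith)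
            have : -(q-1) = 1 - q := by ring
            rw [this]
            exact mul_le_mul_of_nonneg_left hle2 (by linarith))
          (convex_Ici _) (mem_Ici.mpr hzx') (mem_Ici.mpr hsx'.le)
        rw [Real.norm_eq_abs] at hmvt2 ⊢
        have he : q * (s + x) ^ (q-1) - q * (z + x) ^ (q-1)
            = q * ((s + x) ^ (q-1) - (z + x) ^ (q-1)) := by ring
        rw [he, abs_mul, abs_of_nonneg hq0.le]
        have he2 : s + x - (z + x) = s - z := by ring
        rw [Real.norm_eq_abs, he2] at hmvt2
        have habs_sz : |s - z| ≤ |y - z| := abs_sub_le_of_mem_uIcc hs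
        calc q * |(s + x) ^ (q-1) - (z + x) ^ (q-1)|
            ≤ q * ((1-q) * (δ₁/2) ^ (q-2) * |s - z|) := mul_le_mul_of_nonneg_left hmvt2 hq0.le
          _ ≤ q * ((1-q) * (δ₁/2) ^ (q-2) * |y - z|) := by
              apply mul_le_mul_of_nonneg_left _ hq0.le
              apply mul_le_mul_of_nonneg_left habs_sz
              exact mul_nonneg (by linarith) (Real.rpow_nonneg (by linarith) _)
          _ = K₀ * |y - z| := by rw [hK₀def]; ring
      have houter := Convex.norm_image_sub_le_of_norm_hasDerivWithin_le
        (f := fun s : ℝ => (s + x) ^ q - s * (q * (z + x) ^ (q-1)))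
        (f' := fun s : ℝ => q * (s + x) ^ (q-1) - q * (z + x) ^ (q-1))
        (s := uIcc z y) (C := K₀ * |y - z|)
        (fun s hs => by
          have hpos : (0:ℝ) < s + x := lt_trans (by linarith) (hsx s hs)
          have h1 : HasDerivAt (fun s : ℝ => (s + x) ^ q) (q * (s + x) ^ (q-1)) s := by
            have := (Real.hasDerivAt_rpow_const (x := s + x) (p := q)
              (Or.inl (ne_of_gt hpos))).comp s ((hasDerivAt_id s).add_const x)
            simpa [Function.comp_def] using this
          have h2 : HasDerivAt (fun s : ℝ => s * (q * (z + x) ^ (q-1)))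
              (q * (z + x) ^ (q-1)) s := hasDerivAt_mul_const _
          exact (h1.sub h2).hasDerivWithinAt)
        hinner (convex_uIcc _ _) left_mem_uIcc right_mem_uIcc
      have hymax : max (y + x) 0 = y + x := max_eq_left (by linarith [hsx y right_mem_uIcc])
      have hzmax : max (z + x) 0 = z + x := max_eq_left (by linarith [hzx])
      have hEeq : Efun x = ((y + x) ^ q - y * (q * (z + x) ^ (q-1))
          - ((z + x) ^ q - z * (q * (z + x) ^ (q-1)))) * D x := by
        simp only [hEdef, hymax, hzmax]
        ring
      rw [hEeq, Real.norm_eq_abs, abs_mul]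
      rw [Real.norm_eq_abs, Real.norm_eq_abs] at houter
      calc |(y + x) ^ q - y * (q * (z + x) ^ (q-1))
          - ((z + x) ^ q - z * (q * (z + x) ^ (q-1)))| * |D x|
          ≤ K₀ * |y - z| * |y - z| * M := by
            apply mul_le_mul houter hDx (abs_nonneg _)
            positivity
        _ = K₀ * M * (|y - z| * |y - z|) := by ring
  rw [hrepr, hsplit]
  have hlast : 2 * b * K₀ * M * (|y - z| * |y - z|) ≤ ε / 2 * |y - z| := by
    have h0 : (0:ℝ) ≤ 2 * b * K₀ * M := by positivity
    have h1 : 2 * b * K₀ * M * |y - z| ≤ 2 * b * K₀ * M * (ε / (2 * (2 * b * K₀ * M + 1))) :=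
      mul_le_mul_of_nonneg_left hyz2 h0
    have h2 : 2 * b * K₀ * M * (ε / (2 * (2 * b * K₀ * M + 1))) ≤ ε / 2 := by
      have hA1 : (0:ℝ) < 2 * b * K₀ * M + 1 := by linarith
      have he : 2 * b * K₀ * M * (ε / (2 * (2 * b * K₀ * M + 1)))
          = ε / 2 * (2 * b * K₀ * M / (2 * b * K₀ * M + 1)) := by
        field_simp
      rw [he]
      have hle1 : 2 * b * K₀ * M / (2 * b * K₀ * M + 1) ≤ 1 :=
        (div_le_one hA1).mpr (by linarith)
      calc ε / 2 * (2 * b * K₀ * M / (2 * b * K₀ * M + 1)) ≤ ε / 2 * 1 :=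
            mul_le_mul_of_nonneg_left hle1 (by linarith)
        _ = ε / 2 := mul_one _
    calc 2 * b * K₀ * M * (|y - z| * |y - z|) = 2 * b * K₀ * M * |y - z| * |y - z| := by ring
      _ ≤ ε / 2 * |y - z| := mul_le_mul_of_nonneg_right (h1.trans h2) (abs_nonneg _)
  calc ‖(∫ t in (-b)..c, Efun t) + ∫ t in c..b, Efun t‖
      ≤ ‖∫ t in (-b)..c, Efun t‖ + ‖∫ t in c..b, Efun t‖ := norm_add_le _ _
    _ ≤ ε / 2 * |y - z| + 2 * b * K₀ * M * (|y - z| * |y - z|) := add_le_add hnear hfar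
    _ ≤ ε / 2 * |y - z| + ε / 2 * |y - z| := by linarith [hlast]
    _ = ε * ‖y - z‖ := by rw [Real.norm_eq_abs]; ring

theorem stmt_1 (q lam : ℝ) (hq0 : 0 < q) (hq1 : q < 1) (hlam : 0 < lam)
    (G : ℝ → ℝ)
    (hG : ContDiffOn ℝ 1 G (Set.Icc (-lam/2) (lam/2)))
    (hGval : ∀ t ∈ Set.Icc (-lam/2) (lam/2), G t ∈ Set.Icc (0:ℝ) 1)
    (z : ℝ) (hz : z ∈ Set.Ioo (-lam/2) (lam/2)) :
    HasDerivAt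
      (fun y => Real.exp (-(∫ t in (-lam/2)..(lam/2), q * (max (y + t) 0) ^ (q-1) * G t)))
      (-(Real.exp (-(∫ t in (-lam/2)..(lam/2), q * (max (z + t) 0) ^ (q-1) * G t))) *
        (G (lam/2) * q * (z + lam/2) ^ (q-1)
          - ∫ t in (-z)..(lam/2), q * (z + t) ^ (q-1) * deriv G t)) z := by
  have hneg : -lam/2 = -(lam/2) := by ring
  rw [hneg] at hG hGval hz ⊢
  set b : ℝ := lam/2 with hbdef
  have hb : 0 < b := by positivity
  obtain ⟨hz1, hz2⟩ := hz
  -- derivative facts for G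
  have hGc : ContinuousOn G (Icc (-b) b) := hG.continuousOn
  have hGd : ∀ t ∈ Ioo (-b) b, HasDerivAt G (deriv G t) t := by
    intro t ht
    have hmem : Icc (-b) b ∈ nhds t := Icc_mem_nhds ht.1 ht.2
    have := (hG.differentiableOn one_ne_zero t (mem_Icc.mpr ⟨ht.1.le, ht.2.le⟩)).differentiableAt hmem
    exact this.hasDerivAt
  have hD₀c : ContinuousOn (derivWithin G (Icc (-b) b)) (Icc (-b) b) :=
    hG.continuousOn_derivWithin (uniqueDiffOn_Icc (by linarith)) le_rfl
  obtain ⟨M₀, hM₀⟩ := (isCompact_Icc (a := -b) (b := b)).exists_bound_of_continuousOn hD₀c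
  set M : ℝ := max M₀ 0 with hMdef
  have hM : 0 ≤ M := le_max_right _ _
  have hDW : ∀ t ∈ Ioo (-b) b, derivWithin G (Icc (-b) b) t = deriv G t := by
    intro t ht
    exact derivWithin_of_mem_nhds (Icc_mem_nhds ht.1 ht.2)
  have hDb : ∀ t ∈ Ioo (-b) b, |deriv G t| ≤ M := by
    intro t ht
    rw [← hDW t ht]
    exact le_trans (hM₀ t (mem_Icc.mpr ⟨ht.1.le, ht.2.le⟩)) (le_max_left _ _)
  have hDi : IntervalIntegrable (deriv G) volume (-b) b := by
    have h1 : IntervalIntegrable (derivWithin G (Icc (-b) b)) volume (-b) b := by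
      apply ContinuousOn.intervalIntegrable
      rwa [uIcc_of_le (by linarith : -b ≤ b)]
    rw [intervalIntegrable_iff] at h1 ⊢
    apply h1.congr
    have hae : ∀ᵐ t ∂(volume.restrict (Set.uIoc (-b) b)), t ∈ Ioo (-b) b := by
      rw [uIoc_of_le (by linarith : -b ≤ b), ← Measure.restrict_congr_set Ioo_ae_eq_Ioc]
      exact ae_restrict_mem measurableSet_Ioo
    filter_upwards [hae] with t ht
    exact hDW t ht
  -- derivative of the two pieces
  have hW : HasDerivAt (fun y => ∫ t in (-b)..b, max (y + t) 0 ^ q * deriv G t)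
      (∫ t in (-b)..b, q * max (z + t) 0 ^ (q - 1) * deriv G t) z :=
    key_deriv q hq0 hq1 b hb (deriv G) M hM hDi hDb z ⟨hz1, hz2⟩
  have hP : HasDerivAt (fun y => G b * (y + b) ^ q) (G b * (q * (z + b) ^ (q - 1))) z := by
    have h1 : HasDerivAt (fun y : ℝ => (y + b) ^ q) (q * (z + b) ^ (q - 1)) z := by
      have := (Real.hasDerivAt_rpow_const (x := z + b) (p := q)
        (Or.inl (by intro h0; rw [show z = -b by linarith [h0]] at hz1; linarith))).comp z ((hasDerivAt_id z).add_const b)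
      simpa [Function.comp_def] using this
    exact h1.const_mul (G b)
  have hFy : (fun y => ∫ t in (-b)..b, q * max (y + t) 0 ^ (q - 1) * G t)
      =ᶠ[nhds z] (fun y => G b * (y + b) ^ q
        - ∫ t in (-b)..b, max (y + t) 0 ^ q * deriv G t) := by
    have hnb : Ioo (-b) b ∈ nhds z := Ioo_mem_nhds hz1 hz2
    filter_upwards [hnb] with y hy
    exact parts q hq0 hq1 b hb G (deriv G) hGc hGd hDi y ⟨hy.1, hy.2.le⟩
  have hF : HasDerivAt (fun y => ∫ t in (-b)..b, q * max (y + t) 0 ^ (q - 1) * G t)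
      (G b * (q * (z + b) ^ (q - 1))
        - ∫ t in (-b)..b, q * max (z + t) 0 ^ (q - 1) * deriv G t) z :=
    (hP.sub hW).congr_of_eventuallyEq hFy
  -- rewrite the integral in the derivative
  have hIψfull : IntervalIntegrable (fun t => q * max (z + t) 0 ^ (q - 1) * deriv G t)
      volume (-b) b := psiD_intble q hq0 hq1 z b M hb (deriv G) hDi hDb
  have hzmem : -z ∈ uIcc (-b) b := by
    rw [uIcc_of_le (by linarith : -b ≤ b)]
    exact ⟨by linarith, by linarith⟩
  have hintsplit : (∫ t in (-b)..b, q * max (z + t) 0 ^ (q - 1) * deriv G t)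
      = ∫ t in (-z)..b, q * (z + t) ^ (q - 1) * deriv G t := by
    have hs1 : uIcc (-b) (-z) ⊆ uIcc (-b) b := uIcc_subset_uIcc left_mem_uIcc hzmem
    have hs2 : uIcc (-z) b ⊆ uIcc (-b) b := uIcc_subset_uIcc hzmem right_mem_uIcc
    rw [← intervalIntegral.integral_add_adjacent_intervals (hIψfull.mono_set hs1)
      (hIψfull.mono_set hs2)]
    have hzero : (∫ t in (-b)..(-z), q * max (z + t) 0 ^ (q - 1) * deriv G t) = 0 := by
      rw [intervalIntegral.integral_congr (g := fun _ => (0:ℝ)) ?_, intervalIntegral.integral_zero]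
      intro t ht
      rw [uIcc_of_le (by linarith : -b ≤ -z)] at ht
      have : z + t ≤ 0 := by linarith [ht.2]
      simp only [max_eq_right this, Real.zero_rpow (by intro h0; nlinarith : q - 1 ≠ 0),
        mul_zero, zero_mul]
    have hcongr : (∫ t in (-z)..b, q * max (z + t) 0 ^ (q - 1) * deriv G t)
        = ∫ t in (-z)..b, q * (z + t) ^ (q - 1) * deriv G t := by
      apply intervalIntegral.integral_congr
      intro t ht
      rw [uIcc_of_le (by linarith : -z ≤ b)] at ht
      have : 0 ≤ z + t := by linarith [ht.1]
      simp only [max_eq_left this]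
    rw [hzero, hcongr, zero_add]
  rw [hintsplit] at hF
  -- chain rule with exp
  have hexp := (Real.hasDerivAt_exp
    (-(∫ t in (-b)..b, q * max (z + t) 0 ^ (q - 1) * G t))).comp z hF.neg
  refine hexp.congr_deriv ?_
  ring
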